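/- The 4-dimensional algebra T⁴₃₇ over ℂ with basis e₁,e₂,e₃,e₄ and nonzero products e₁e₁ = e₂, e₁e₂ = e₃, e₁e₃ = e₄, e₂e₁ = e₄ is a terminal algebra that is not a left Leibniz algebra, and it is a one-dimensional central extension of the algebra T³*₀₅ (basis e₁,e₂,e₃, e₁e₁ = e₂, e₁e₂ = e₃): namely T⁴₃₇ ≅ (T³*₀₅)_θ for θ = Δ₁₃ + Δ₂₁, where Δᵢⱼ(eₗ,eₘ) = δᵢₗδⱼₘ. -/
import Mathlib


def kbr1 {V : Type*} [AddCommGroup V] (A : V → V) (B : V → V → V) : V → V → V :=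
  fun x y => A (B x y) - B (A x) y - B x (A y)

def kbr2 {V : Type*} [AddCommGroup V] (B C : V → V → V) : V → V → V → V :=
  fun x y z => B (C x y) z + B x (C y z) + B y (C x z)
    - C (B x y) z - C x (B y z) - C y (B x z)

def IsTerminal {V : Type*} [AddCommGroup V] (P : V → V → V) : Prop :=
  ∀ a x y z, kbr2 (kbr1 (fun w => P a w) P) P x y z = 0

def LeftLeibniz {V : Type*} [AddCommGroup V] (P : V → V → V) : Prop :=
  ∀ a x y, P a (P x y) = P (P a x) y + P x (P a y)

/-- T⁴₃₇: basis `e₁,…,e₄`, nonzero products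
`e₁e₁ = e₂`, `e₁e₂ = e₃`, `e₁e₃ = e₄`, `e₂e₁ = e₄`. -/
def mulT437 (x y : Fin 4 → ℂ) : Fin 4 → ℂ :=
  (x 0 * y 0) • (Pi.single 1 1 : Fin 4 → ℂ) + (x 0 * y 1) • (Pi.single 2 1 : Fin 4 → ℂ)
    + (x 0 * y 2 + x 1 * y 0) • (Pi.single 3 1 : Fin 4 → ℂ)

/-- T³*₀₅: basis `e₁,e₂,e₃`, nonzero products `e₁e₁ = e₂`, `e₁e₂ = e₃`. -/
def mulT3s05 (x y : Fin 3 → ℂ) : Fin 3 → ℂ :=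
  (x 0 * y 0) • (Pi.single 1 1 : Fin 3 → ℂ) + (x 0 * y 1) • (Pi.single 2 1 : Fin 3 → ℂ)

/-- The cocycle `θ = Δ₁₃ + Δ₂₁` on T³*₀₅. -/
def θ1321 (x y : Fin 3 → ℂ) : ℂ := x 0 * y 2 + x 1 * y 0

lemma mulT437_apply (x y : Fin 4 → ℂ) :
    mulT437 x y = ![0, x 0 * y 0, x 0 * y 1, x 0 * y 2 + x 1 * y 0] := by
  funext i
  fin_cases i <;>
    simp [mulT437, Pi.single, Function.update] <;> norm_num

noncomputable def phi437 : (Fin 4 → ℂ) ≃ₗ[ℂ] ((Fin 3 → ℂ) × ℂ) where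
  toFun x := ((fun i => x i.castSucc), x 3)
  invFun p := Fin.snoc p.1 p.2
  map_add' x y := rfl
  map_smul' c x := rfl
  left_inv x := by
    funext i
    fin_cases i <;> simp [Fin.snoc]
  right_inv p := by
    refine Prod.ext ?_ ?_
    · funext i; fin_cases i <;> rfl
    · exact Fin.snoc_last (α := fun _ => ℂ) p.2 p.1

/-- T⁴₃₇ is terminal, not left Leibniz, and is isomorphic to the one-dimensional
central extension `(T³*₀₅)_θ` with `θ = Δ₁₃ + Δ₂₁`. -/
theorem stmt17 :
    IsTerminal mulT437 ∧ ¬ LeftLeibniz mulT437 ∧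
    ∃ φ : (Fin 4 → ℂ) ≃ₗ[ℂ] ((Fin 3 → ℂ) × ℂ),
      ∀ a b, φ (mulT437 a b)
        = ((mulT3s05 (φ a).1 (φ b).1, θ1321 (φ a).1 (φ b).1) : (Fin 3 → ℂ) × ℂ) := by
  refine ⟨?_, ?_, ?_⟩
  · intro a x y z
    funext i
    fin_cases i <;>
      simp [kbr2, kbr1, mulT437_apply, Matrix.cons_val_zero, Matrix.cons_val_one] <;> ring
  · intro h
    have := congrFun (h (Pi.single 0 1) (Pi.single 0 1) (Pi.single 0 1)) 3
    simp [mulT437_apply, Pi.single, Function.update] at this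
  · refine ⟨phi437, ?_⟩
    intro a b
    refine Prod.ext ?_ ?_
    · funext i
      fin_cases i <;>
        simp [phi437, mulT437_apply, mulT3s05, Pi.single, Function.update, Fin.castSucc, Fin.castAdd, Fin.castLE]
    · simp [phi437, mulT437_apply, θ1321, Fin.castSucc, Fin.castAdd, Fin.castLE]
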